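/- Let w be a weight, f ≥ 0, and L the stopping family as above (expectations E^w_L f increase geometrically by factor 4 along decreasing chains of stopping cubes). Then Σ_{L ∈ L} (E^w_L f)^p w(L) ≤ C_p ‖f‖_{L^p(w dm)}^p for 1 < p < ∞, with C_p independent of w. -/

import Mathlib

open MeasureTheory
open scoped ENNReal Classical

/-- The dyadic cube of sidelength `2^k` at position `x`. -/
def dyadicCube (n : ℕ) (k : ℤ) (x : Fin n → ℤ) : Set (Fin n → ℝ) :=
  {y | ∀ i, (x i : ℝ) * 2 ^ k ≤ y i ∧ y i < ((x i : ℝ) + 1) * 2 ^ k}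

/-- The weighted average `E^w_Q f = w(Q)⁻¹ ∫_Q f w dm`. -/
noncomputable def wAvg {n : ℕ} (w f : (Fin n → ℝ) → ℝ≥0∞) (Q : Set (Fin n → ℝ)) : ℝ≥0∞ :=
  (∫⁻ y in Q, w y)⁻¹ * ∫⁻ y in Q, f y * w y

/-- The dyadic weighted maximal function `M_w f`. -/
noncomputable def dyadicMaximal {n : ℕ} (w f : (Fin n → ℝ) → ℝ≥0∞)
    (y : Fin n → ℝ) : ℝ≥0∞ :=
  ⨆ (k : ℤ) (x : Fin n → ℤ) (_ : y ∈ dyadicCube n k x), wAvg w f (dyadicCube n k x)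

/-- The dyadic cube indexed by a pair `(k, x)`. -/
def dyC {n : ℕ} (Q : ℤ × (Fin n → ℤ)) : Set (Fin n → ℝ) := dyadicCube n Q.1 Q.2

/-- The corona/stopping family: `L₀ = {Q₀}` and `L_{i+1}` consists of the maximal
dyadic subcubes `Q` of cubes `L ∈ L_i` with `E^w_Q f > 4 E^w_L f`. -/
def isStopping {n : ℕ} (w f : (Fin n → ℝ) → ℝ≥0∞) (Q₀ : ℤ × (Fin n → ℤ)) :
    ℕ → ℤ × (Fin n → ℤ) → Prop
  | 0, Q => Q = Q₀
  | i + 1, Q => ∃ L, isStopping w f Q₀ i L ∧ dyC Q ⊆ dyC L ∧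
      4 * wAvg w f (dyC L) < wAvg w f (dyC Q) ∧
      ∀ Q' : ℤ × (Fin n → ℤ), dyC Q ⊆ dyC Q' → dyC Q' ⊆ dyC L →
        4 * wAvg w f (dyC L) < wAvg w f (dyC Q') → dyC Q' = dyC Q


section Geo
variable {n : ℕ}

lemma two_zpow_pos (k : ℤ) : (0:ℝ) < 2 ^ k := zpow_pos (by norm_num) k

lemma corner_mem (k : ℤ) (x : Fin n → ℤ) :
    (fun i => (x i : ℝ) * 2 ^ k) ∈ dyadicCube n k x := by
  intro i
  refine ⟨le_refl _, ?_⟩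
  have := two_zpow_pos k
  show (x i : ℝ) * 2 ^ k < ((x i : ℝ) + 1) * 2 ^ k
  nlinarith

lemma dyadicCube_nonempty (k : ℤ) (x : Fin n → ℤ) : (dyadicCube n k x).Nonempty :=
  ⟨_, corner_mem k x⟩

lemma measurableSet_dyadicCube (k : ℤ) (x : Fin n → ℤ) :
    MeasurableSet (dyadicCube n k x) := by
  have : dyadicCube n k x =
      ⋂ i, (fun y : Fin n → ℝ => y i) ⁻¹' Set.Ico ((x i : ℝ) * 2 ^ k) (((x i : ℝ) + 1) * 2 ^ k) := by
    ext y
    simp [dyadicCube, Set.mem_iInter, Set.mem_Ico]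
  rw [this]
  exact MeasurableSet.iInter fun i => (measurable_pi_apply i) measurableSet_Ico

lemma measurableSet_dyC (Q : ℤ × (Fin n → ℤ)) : MeasurableSet (dyC Q) :=
  measurableSet_dyadicCube Q.1 Q.2

lemma zpow_split {k k' : ℤ} (h : k ≤ k') :
    (2:ℝ) ^ k' = ((2 ^ (k' - k).toNat : ℤ) : ℝ) * 2 ^ k := by
  have h1 : ((2 ^ (k' - k).toNat : ℤ) : ℝ) = (2:ℝ) ^ (((k' - k).toNat : ℤ)) := by
    push_cast
    exact (zpow_natCast 2 _).symm
  rw [h1, ← zpow_add₀ (by norm_num : (2:ℝ) ≠ 0)]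
  congr 1
  omega

lemma dyadicCube_subset_of_le {k k' : ℤ} {x : Fin n → ℤ} {x' : Fin n → ℤ} (h : k ≤ k')
    (hz : (dyadicCube n k x ∩ dyadicCube n k' x').Nonempty) :
    dyadicCube n k x ⊆ dyadicCube n k' x' := by
  obtain ⟨z, hz1, hz2⟩ := hz
  intro y hy i
  obtain ⟨h1l, h1u⟩ := hz1 i
  obtain ⟨h2l, h2u⟩ := hz2 i
  obtain ⟨h3l, h3u⟩ := hy i
  set d : ℕ := (k' - k).toNat with hd
  have hsplit : (2:ℝ) ^ k' = ((2 ^ d : ℤ) : ℝ) * 2 ^ k := zpow_split h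
  have hp := two_zpow_pos k
  have hB : ((x' i : ℝ)) * 2 ^ k' = ((x' i * 2 ^ d : ℤ) : ℝ) * 2 ^ k := by
    rw [hsplit]; push_cast; ring
  have hB' : ((x' i : ℝ) + 1) * 2 ^ k' = ((x' i * 2 ^ d + 2 ^ d : ℤ) : ℝ) * 2 ^ k := by
    rw [hsplit]; push_cast; ring
  rw [hB] at h2l
  rw [hB'] at h2u
  have key1 : (x' i * 2 ^ d : ℤ) ≤ x i := by
    by_contra hc
    push_neg at hc
    have hc2 : (x i + 1 : ℤ) ≤ x' i * 2 ^ d := by omega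
    have hc' : ((x i : ℝ) + 1) ≤ ((x' i * 2 ^ d : ℤ) : ℝ) := by exact_mod_cast hc2
    nlinarith
  have key2 : (x i + 1 : ℤ) ≤ x' i * 2 ^ d + 2 ^ d := by
    by_contra hc
    push_neg at hc
    have hc2 : (x' i * 2 ^ d + 2 ^ d : ℤ) ≤ x i := by omega
    have hc' : ((x' i * 2 ^ d + 2 ^ d : ℤ) : ℝ) ≤ (x i : ℝ) := by exact_mod_cast hc2
    nlinarith
  have key1' : ((x' i * 2 ^ d : ℤ) : ℝ) ≤ (x i : ℝ) := by exact_mod_cast key1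
  have key2' : ((x i : ℝ) + 1) ≤ ((x' i * 2 ^ d + 2 ^ d : ℤ) : ℝ) := by exact_mod_cast key2
  constructor
  · rw [hB]; nlinarith
  · rw [hB']; nlinarith

lemma dyC_nested {Q Q' : ℤ × (Fin n → ℤ)} (h : (dyC Q ∩ dyC Q').Nonempty) :
    dyC Q ⊆ dyC Q' ∨ dyC Q' ⊆ dyC Q := by
  rcases le_total Q.1 Q'.1 with hk | hk
  · exact Or.inl (dyadicCube_subset_of_le hk h)
  · exact Or.inr (dyadicCube_subset_of_le hk (Set.inter_comm _ _ ▸ h))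

lemma dyC_inj_aux {Q Q' : ℤ × (Fin n → ℤ)} (hn : 0 < n) (hk : Q.1 ≤ Q'.1)
    (h : dyC Q = dyC Q') : Q.1 = Q'.1 := by
  by_contra hne
  have hklt : Q.1 < Q'.1 := lt_of_le_of_ne hk hne
  obtain ⟨k, x⟩ := Q
  obtain ⟨k', x'⟩ := Q'
  simp only at hklt hk
  have hcorner : ∀ i, (x i : ℝ) * 2 ^ k = (x' i : ℝ) * 2 ^ k' := by
    intro i
    have hc1 : (fun i => (x i : ℝ) * 2 ^ k) ∈ dyC (k', x') := by
      rw [← h]; exact corner_mem k x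
    have hc2 : (fun i => (x' i : ℝ) * 2 ^ k') ∈ dyC (k, x) := by
      rw [h]; exact corner_mem k' x'
    have h1 := (hc1 i).1
    have h2 := (hc2 i).1
    simp only [dyC] at h1 h2
    exact le_antisymm h2 h1
  set i0 : Fin n := ⟨0, hn⟩
  set y : Fin n → ℝ := fun i => if i = i0 then ((x i0 : ℝ) + 1) * 2 ^ k else (x i : ℝ) * 2 ^ k
  have hy' : y ∈ dyC (k', x') := by
    intro i
    show (x' i : ℝ) * 2 ^ k' ≤ y i ∧ y i < ((x' i : ℝ) + 1) * 2 ^ k'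
    have hc := hcorner i
    by_cases hi : i = i0
    · subst hi
      simp only [y, if_pos rfl]
      constructor
      · rw [← hc]
        nlinarith [two_zpow_pos k]
      · have h2 : (2:ℝ) ^ k < 2 ^ k' := zpow_lt_zpow_right₀ (by norm_num) hklt
        nlinarith
    · simp only [y, if_neg hi]
      rw [hc]
      exact ⟨le_refl _, by nlinarith [two_zpow_pos k']⟩
  have hy : y ∉ dyC (k, x) := by
    intro hmem
    have := (hmem i0).2
    simp only [y, if_pos rfl] at this
    exact lt_irrefl _ this
  rw [h] at hy
  exact hy hy'

lemma dyC_inj (hn : 0 < n) {Q Q' : ℤ × (Fin n → ℤ)} (h : dyC Q = dyC Q') : Q = Q' := by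
  have hk : Q.1 = Q'.1 := by
    rcases le_total Q.1 Q'.1 with hle | hle
    · exact dyC_inj_aux hn hle h
    · exact (dyC_inj_aux hn hle h.symm).symm
  obtain ⟨k, x⟩ := Q
  obtain ⟨k', x'⟩ := Q'
  simp only at hk
  subst hk
  have hx : x = x' := by
    funext i
    have hc1 : (fun i => (x i : ℝ) * 2 ^ k) ∈ dyC (k, x') := by
      rw [← h]; exact corner_mem k x
    have hc2 : (fun i => (x' i : ℝ) * 2 ^ k) ∈ dyC (k, x) := by
      rw [h]; exact corner_mem k x'
    have h1 := (hc1 i).1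
    have h2 := (hc2 i).1
    simp only [dyC] at h1 h2
    have h3 : (x i : ℝ) * 2 ^ k = (x' i : ℝ) * 2 ^ k := le_antisymm h2 h1
    have hp := two_zpow_pos k
    have : (x i : ℝ) = (x' i : ℝ) := by
      exact mul_right_cancel₀ (ne_of_gt hp) h3
    exact_mod_cast this
  rw [hx]

end Geo
section Stopping
variable {n : ℕ} (w f : (Fin n → ℝ) → ℝ≥0∞) (Q₀ : ℤ × (Fin n → ℤ))

lemma stopping_subset : ∀ (i : ℕ) (Q : ℤ × (Fin n → ℤ)),
    isStopping w f Q₀ i Q → dyC Q ⊆ dyC Q₀ := by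
  intro i
  induction i with
  | zero => intro Q h; cases h; exact subset_rfl
  | succ i ih =>
    intro Q h
    obtain ⟨L, hL, hsub, -, -⟩ := h
    exact hsub.trans (ih L hL)

lemma stopping_same_step : ∀ (i : ℕ) (Q Q' : ℤ × (Fin n → ℤ)),
    isStopping w f Q₀ i Q → isStopping w f Q₀ i Q' →
    ∀ y, y ∈ dyC Q → y ∈ dyC Q' → dyC Q = dyC Q' := by
  intro i
  induction i with
  | zero => intro Q Q' h h' y _ _; cases h; cases h'; rfl
  | succ i ih =>
    intro Q Q' h h' y hy hy'
    obtain ⟨L, hL, hQL, hgt, hmax⟩ := h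
    obtain ⟨L', hL', hQL', hgt', hmax'⟩ := h'
    have hLL : dyC L = dyC L' := ih L L' hL hL' y (hQL hy) (hQL' hy')
    rcases dyC_nested ⟨y, hy, hy'⟩ with hc | hc
    · exact (hmax Q' hc (hLL ▸ hQL') (by rw [hLL]; exact hgt')).symm
    · exact hmax' Q hc (hLL ▸ hQL) (by rw [← hLL]; exact hgt)

lemma stopping_lt_step : ∀ (i : ℕ) (Q : ℤ × (Fin n → ℤ)),
    isStopping w f Q₀ i Q → ∀ (i' : ℕ) (Q' : ℤ × (Fin n → ℤ)), i' < i →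
    isStopping w f Q₀ i' Q' → ∀ y, y ∈ dyC Q → y ∈ dyC Q' →
    dyC Q ⊆ dyC Q' ∧ 4 * wAvg w f (dyC Q') < wAvg w f (dyC Q) := by
  intro i
  induction i with
  | zero => intro Q _ i' Q' h; omega
  | succ i ih =>
    intro Q h i' Q' hlt h' y hy hy'
    obtain ⟨L, hL, hQL, hgt, -⟩ := h
    rcases Nat.lt_succ_iff_lt_or_eq.mp hlt with hlt' | rfl
    · obtain ⟨hsub, h4⟩ := ih L hL i' Q' hlt' h' y (hQL hy) hy'
      refine ⟨hQL.trans hsub, ?_⟩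
      calc 4 * wAvg w f (dyC Q') < wAvg w f (dyC L) := h4
        _ ≤ 4 * wAvg w f (dyC L) :=
          le_mul_of_one_le_left (zero_le) (by norm_num)
        _ < wAvg w f (dyC Q) := hgt
    · have hLQ' : dyC L = dyC Q' :=
        stopping_same_step w f Q₀ i' L Q' hL h' y (hQL hy) hy'
      exact ⟨hQL.trans hLQ'.subset, by rw [← hLQ']; exact hgt⟩

lemma stopping_dyC_ne {Q Q' : ℤ × (Fin n → ℤ)}
    (hQ : ∃ i, isStopping w f Q₀ i Q) (hQ' : ∃ i, isStopping w f Q₀ i Q')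
    (hne : Q ≠ Q') : dyC Q ≠ dyC Q' := by
  rcases Nat.eq_zero_or_pos n with hn | hn
  · subst hn
    have huniv : ∀ P P' : ℤ × (Fin 0 → ℤ), dyC P = dyC P' := by
      intro P P'
      ext y
      constructor <;> intro <;> intro i <;> exact absurd i.2 (by omega)
    have hstop : ∀ (i : ℕ) (P : ℤ × (Fin 0 → ℤ)), isStopping w f Q₀ i P → P = Q₀ := by
      intro i
      induction i with
      | zero => intro P h; exact h
      | succ i ih =>
        intro P h
        obtain ⟨L, hL, -, hgt, -⟩ := h
        rw [huniv P L] at hgt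
        exact absurd hgt (not_lt.mpr (le_mul_of_one_le_left (zero_le) (by norm_num)))
    obtain ⟨i, hQ⟩ := hQ
    obtain ⟨i', hQ'⟩ := hQ'
    exact absurd ((hstop i Q hQ).trans (hstop i' Q' hQ').symm) hne
  · exact fun h => hne (dyC_inj hn h)

lemma stopping_dichotomy {Q Q' : ℤ × (Fin n → ℤ)}
    (hQ : ∃ i, isStopping w f Q₀ i Q) (hQ' : ∃ i, isStopping w f Q₀ i Q')
    (hne : Q ≠ Q') {y : Fin n → ℝ} (hy : y ∈ dyC Q) (hy' : y ∈ dyC Q') :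
    4 * wAvg w f (dyC Q) < wAvg w f (dyC Q') ∨
      4 * wAvg w f (dyC Q') < wAvg w f (dyC Q) := by
  obtain ⟨i, hQ⟩ := hQ
  obtain ⟨i', hQ'⟩ := hQ'
  rcases lt_trichotomy i i' with h | rfl | h
  · exact Or.inl (stopping_lt_step w f Q₀ i' Q' hQ' i Q h hQ y hy' hy).2
  · exact absurd (stopping_same_step w f Q₀ i Q Q' hQ hQ' y hy hy')
      (stopping_dyC_ne w f Q₀ ⟨i, hQ⟩ ⟨i, hQ'⟩ hne)
  · exact Or.inr (stopping_lt_step w f Q₀ i Q hQ i' Q' h hQ' y hy hy').2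

end Stopping
section Analysis

lemma geom_finset_sum {α : Type} {r : ℝ} (hr : 0 < r) (U : Finset α) (v : α → ℝ≥0∞)
    (hv : ∀ a ∈ U, ∀ b ∈ U, a ≠ b → 4 * v a < v b ∨ 4 * v b < v a) :
    ∑ a ∈ U, v a ^ r ≤ (1 - (4:ℝ≥0∞)⁻¹ ^ r)⁻¹ * (U.sup v) ^ r := by
  set t : ℝ≥0∞ := (4:ℝ≥0∞)⁻¹ ^ r with ht
  set c : ℝ≥0∞ := (1 - t)⁻¹ with hc
  have ht1 : t < 1 := by
    rw [ht]
    calc (4:ℝ≥0∞)⁻¹ ^ r < 1 ^ r := by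
          apply ENNReal.rpow_lt_rpow _ hr
          rw [ENNReal.inv_lt_one]
          norm_num
      _ = 1 := ENNReal.one_rpow r
  have hsub0 : (1:ℝ≥0∞) - t ≠ 0 := by
    rw [ne_eq, tsub_eq_zero_iff_le]
    exact not_le.mpr ht1
  have hsubtop : (1:ℝ≥0∞) - t ≠ ⊤ := by
    exact ne_top_of_le_ne_top ENNReal.one_ne_top tsub_le_self
  have hcc : 1 + c * t = c := by
    have h1 : ((1:ℝ≥0∞) - t) * c = 1 := ENNReal.mul_inv_cancel hsub0 hsubtop
    calc 1 + c * t = (1 - t) * c + t * c := by rw [h1, mul_comm c t]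
      _ = ((1 - t) + t) * c := (add_mul _ _ _).symm
      _ = 1 * c := by rw [tsub_add_cancel_of_le ht1.le]
      _ = c := one_mul c
  induction U using Finset.strongInduction with
  | _ U ih =>
    rcases U.eq_empty_or_nonempty with rfl | hne
    · simp
    · obtain ⟨m, hm, hmax⟩ := U.exists_max_image v hne
      have herase : ∀ a ∈ U.erase m, v a ≤ 4⁻¹ * v m := by
        intro a ha
        have hamem := Finset.mem_of_mem_erase ha
        rcases hv a hamem m hm (Finset.ne_of_mem_erase ha) with h4 | h4
        · calc v a = 4⁻¹ * (4 * v a) := by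
                rw [← mul_assoc, ENNReal.inv_mul_cancel (by norm_num) (by norm_num), one_mul]
            _ ≤ 4⁻¹ * v m := mul_le_mul_right h4.le _
        · exact absurd (h4.trans_le ((hmax a hamem).trans
            (le_mul_of_one_le_left (zero_le) (by norm_num)))) (lt_irrefl _)
      have hsup : (U.erase m).sup v ≤ 4⁻¹ * v m := Finset.sup_le herase
      have hIH := ih (U.erase m) (Finset.erase_ssubset hm)
        (fun a ha b hb hab => hv a (Finset.mem_of_mem_erase ha) b (Finset.mem_of_mem_erase hb) hab)
      calc ∑ a ∈ U, v a ^ r = v m ^ r + ∑ a ∈ U.erase m, v a ^ r :=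
            (Finset.add_sum_erase U _ hm).symm
        _ ≤ v m ^ r + c * ((U.erase m).sup v) ^ r := by exact add_le_add_right hIH _
        _ ≤ v m ^ r + c * (4⁻¹ * v m) ^ r := by
            refine add_le_add_right (mul_le_mul_right (ENNReal.rpow_le_rpow hsup hr.le) _) _
        _ = v m ^ r + c * (t * v m ^ r) := by
            rw [ENNReal.mul_rpow_of_nonneg _ _ hr.le]
        _ = (1 + c * t) * v m ^ r := by ring
        _ = c * v m ^ r := by rw [hcc]
        _ ≤ c * (U.sup v) ^ r :=
            mul_le_mul_right (ENNReal.rpow_le_rpow (Finset.le_sup hm) hr.le) _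

end Analysis
section Avg
variable {n : ℕ} {w f : (Fin n → ℝ) → ℝ≥0∞}

lemma holder_set {p q : ℝ} (hpq : Real.HolderConjugate p q)
    (hw : Measurable w) (hf : Measurable f) {A : Set (Fin n → ℝ)} (hA : MeasurableSet A) :
    ∫⁻ y in A, f y * w y ≤
      (∫⁻ y in A, f y ^ p * w y) ^ (1/p) * (∫⁻ y in A, w y) ^ (1/q) := by
  set μA := (volume.restrict A).withDensity w with hμA
  have hconv : ∀ (G : (Fin n → ℝ) → ℝ≥0∞), Measurable G →
      ∫⁻ y, G y ∂μA = ∫⁻ y in A, G y * w y := by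
    intro G hG
    rw [hμA, lintegral_withDensity_eq_lintegral_mul _ hw hG]
    exact lintegral_congr fun y => mul_comm _ _
  have h := ENNReal.lintegral_mul_le_Lp_mul_Lq μA hpq hf.aemeasurable
    (aemeasurable_const (b := (1:ℝ≥0∞)))
  simp only [Pi.mul_apply, mul_one] at h
  have h1 : ∫⁻ y, f y ∂μA = ∫⁻ y in A, f y * w y := hconv _ hf
  have h2 : ∫⁻ y, f y ^ p ∂μA = ∫⁻ y in A, f y ^ p * w y :=
    hconv _ (hf.pow_const p)
  have h3 : ∫⁻ y, (fun _ => (1:ℝ≥0∞)) y ^ q ∂μA = ∫⁻ y in A, w y := by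
    simp only [ENNReal.one_rpow]
    rw [hconv _ measurable_const]
    exact lintegral_congr fun y => one_mul _
  rw [h1, h2, h3] at h
  exact h

lemma avg_rpow_mul_le {p q : ℝ} (hpq : Real.HolderConjugate p q)
    (hw : Measurable w) (hf : Measurable f) {A : Set (Fin n → ℝ)} (hA : MeasurableSet A) :
    wAvg w f A ^ p * (∫⁻ y in A, w y) ≤ ∫⁻ y in A, f y ^ p * w y := by
  have hp0 : 0 < p := hpq.pos
  set W := ∫⁻ y in A, w y with hW
  set X := ∫⁻ y in A, f y ^ p * w y with hX
  by_cases hW0 : W = 0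
  · have hfw : ∫⁻ y in A, f y * w y = 0 := by
      have hw0 : w =ᵐ[volume.restrict A] 0 := (lintegral_eq_zero_iff hw).mp hW0
      rw [lintegral_eq_zero_iff (f := fun y => f y * w y) (hf.mul hw)]
      filter_upwards [hw0] with y hy
      simp only [Pi.zero_apply] at hy ⊢
      rw [hy, mul_zero]
    have : wAvg w f A = 0 := by rw [wAvg, ← hW, hfw, mul_zero]
    rw [this, ENNReal.zero_rpow_of_pos hp0, zero_mul]
    exact zero_le
  by_cases hWtop : W = ⊤
  · have : wAvg w f A = 0 := by
      rw [wAvg, ← hW, hWtop, ENNReal.inv_top, zero_mul]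
    rw [this, ENNReal.zero_rpow_of_pos hp0, zero_mul]
    exact zero_le
  · have hWpos : 0 < W := pos_iff_ne_zero.mpr hW0
    have hHold := holder_set hpq hw hf hA
    have hWp0 : W ^ p ≠ 0 := (ENNReal.rpow_pos hWpos hWtop).ne'
    have hWptop : W ^ p ≠ ⊤ := ENNReal.rpow_ne_top_of_nonneg hp0.le hWtop
    have hqp : 1/q * p + 1 = p := by
      have h := hpq.inv_add_inv_eq_one
      have hq : q⁻¹ = 1 - p⁻¹ := by linarith
      rw [one_div, hq]
      field_simp
      ring
    calc wAvg w f A ^ p * W = (W⁻¹ * ∫⁻ y in A, f y * w y) ^ p * W := rfl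
      _ ≤ (W⁻¹ * (X ^ (1/p) * W ^ (1/q))) ^ p * W :=
          mul_le_mul_left (ENNReal.rpow_le_rpow (mul_le_mul_right hHold _) hp0.le) W
      _ = (W⁻¹) ^ p * ((X ^ (1/p)) ^ p * (W ^ (1/q)) ^ p) * W := by
          rw [ENNReal.mul_rpow_of_nonneg _ _ hp0.le, ENNReal.mul_rpow_of_nonneg _ _ hp0.le]
      _ = X * ((W ^ p)⁻¹ * (W ^ (1/q * p) * W)) := by
          rw [ENNReal.inv_rpow, ← ENNReal.rpow_mul W (1/q) p,
            ← ENNReal.rpow_mul X (1/p) p, one_div_mul_cancel hp0.ne', ENNReal.rpow_one]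
          ring
      _ = X * ((W ^ p)⁻¹ * W ^ p) := by
          have hWW : W ^ (1/q * p) * W = W ^ p := by
            nth_rewrite 2 [← ENNReal.rpow_one W]
            rw [← ENNReal.rpow_add _ _ hW0 hWtop, hqp]
          rw [hWW]
      _ = X := by rw [ENNReal.inv_mul_cancel hWp0 hWptop, mul_one]

end Avg
section Boot
variable {n : ℕ} {w f : (Fin n → ℝ) → ℝ≥0∞}

lemma bootstrap {p q : ℝ} (hpq : Real.HolderConjugate p q)
    (hw : Measurable w) (hf : Measurable f) (Q₀ : ℤ × (Fin n → ℤ))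
    (S : Finset (ℤ × (Fin n → ℤ)))
    (hS : ∀ Q ∈ S, (∃ i, isStopping w f Q₀ i Q) ∧
      (∫⁻ y in dyC Q, w y) ≠ 0 ∧ (∫⁻ y in dyC Q, w y) ≠ ⊤ ∧
      wAvg w f (dyC Q) ≠ 0 ∧ wAvg w f (dyC Q) ≠ ⊤) :
    ∑ Q ∈ S, wAvg w f (dyC Q) ^ p * ∫⁻ y in dyC Q, w y ≤
      ((1 - (4:ℝ≥0∞)⁻¹ ^ (p-1))⁻¹) ^ p * ∫⁻ y, f y ^ p * w y := by
  have hp1 : 1 < p := hpq.lt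
  have hp0 : 0 < p := hpq.pos
  have hq0 : 0 < q := hpq.symm.pos
  have hr : 0 < p - 1 := by linarith
  set r : ℝ := p - 1 with hrdef
  set cc : ℝ≥0∞ := (1 - (4:ℝ≥0∞)⁻¹ ^ r)⁻¹ with hccdef
  set I : ℝ≥0∞ := ∫⁻ y, f y ^ p * w y with hIdef
  set g : ℤ × (Fin n → ℤ) → ℝ≥0∞ := fun Q => wAvg w f (dyC Q) with hgdef
  set W : ℤ × (Fin n → ℤ) → ℝ≥0∞ := fun Q => ∫⁻ y in dyC Q, w y with hWdef
  have hione : 1/p + 1/q = 1 := by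
    rw [one_div, one_div]; exact hpq.inv_add_inv_eq_one
  have h1pr : 1/p * r = 1/q := by
    have h := hpq.inv_add_inv_eq_one
    have hq : q⁻¹ = 1 - p⁻¹ := by linarith
    rw [one_div, one_div, hq, hrdef]
    field_simp
  set Φ : (Fin n → ℝ) → ℝ≥0∞ :=
    fun y => ∑ Q ∈ S, (dyC Q).indicator (fun _ => g Q ^ r) y with hΦdef
  set D : (Fin n → ℝ) → ℝ≥0∞ :=
    fun y => ∑ Q ∈ S, (dyC Q).indicator (fun _ => g Q ^ p) y with hDdef
  have hΦm : Measurable Φ :=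
    Finset.measurable_sum _ fun Q _ => measurable_const.indicator (measurableSet_dyC Q)
  have hDm : Measurable D :=
    Finset.measurable_sum _ fun Q _ => measurable_const.indicator (measurableSet_dyC Q)
  set T : ℝ≥0∞ := ∑ Q ∈ S, g Q ^ p * W Q with hTdef
  -- Step 1 : T = ∫ f Φ w
  have step1 : T = ∫⁻ y, (f y * Φ y) * w y := by
    have hterm : ∀ Q ∈ S, g Q ^ p * W Q =
        ∫⁻ y, (dyC Q).indicator (fun y => g Q ^ r * (f y * w y)) y := by
      intro Q hQ
      obtain ⟨-, hW0, hWt, hg0, hgt⟩ := hS Q hQ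
      have hgW : g Q * W Q = ∫⁻ y in dyC Q, f y * w y := by
        show wAvg w f (dyC Q) * (∫⁻ y in dyC Q, w y) = _
        rw [wAvg, mul_comm, ← mul_assoc, ENNReal.mul_inv_cancel hW0 hWt, one_mul]
      have hgp : g Q ^ p = g Q ^ r * g Q := by
        nth_rewrite 1 [show p = r + 1 by rw [hrdef]; ring]
        rw [ENNReal.rpow_add _ _ hg0 hgt, ENNReal.rpow_one]
      rw [lintegral_indicator (measurableSet_dyC Q), lintegral_const_mul _ (f := fun a => f a * w a) (hf.mul hw),
        hgp, mul_assoc, hgW]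
    rw [hTdef, Finset.sum_congr rfl hterm, ← lintegral_finset_sum _ (f := fun Q y => (dyC Q).indicator (fun y => g Q ^ r * (f y * w y)) y)
      (fun Q _ => (measurable_const.mul (hf.mul hw)).indicator (measurableSet_dyC Q))]
    apply lintegral_congr
    intro y
    simp only [hΦdef, Set.indicator_apply]
    rw [show (f y * ∑ Q ∈ S, if y ∈ dyC Q then g Q ^ r else 0) * w y
        = ∑ Q ∈ S, f y * (if y ∈ dyC Q then g Q ^ r else 0) * w y by
      rw [Finset.mul_sum, Finset.sum_mul]]
    refine Finset.sum_congr rfl fun Q _ => ?_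
    by_cases hy : y ∈ dyC Q
    · simp only [if_pos hy]; ring
    · simp only [if_neg hy, mul_zero, zero_mul]
  -- Step 2 : pointwise Φ ≤ cc * D ^ (1/q)
  have hΦD : ∀ y, Φ y ≤ cc * D y ^ (1/q) := by
    intro y
    have hΦy : Φ y = ∑ Q ∈ S.filter (fun Q => y ∈ dyC Q), g Q ^ r := by
      rw [Finset.sum_filter]
      exact Finset.sum_congr rfl fun Q _ => Set.indicator_apply _ _ _
    have hdich : ∀ a ∈ S.filter (fun Q => y ∈ dyC Q), ∀ b ∈ S.filter (fun Q => y ∈ dyC Q),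
        a ≠ b → 4 * g a < g b ∨ 4 * g b < g a := by
      intro a ha b hb hab
      rw [Finset.mem_filter] at ha hb
      exact stopping_dichotomy w f Q₀ (hS a ha.1).1 (hS b hb.1).1 hab ha.2 hb.2
    have hgeom := geom_finset_sum hr (S.filter (fun Q => y ∈ dyC Q)) g hdich
    have hsup : (S.filter (fun Q => y ∈ dyC Q)).sup g ≤ (D y) ^ (1/p) := by
      apply Finset.sup_le
      intro Q hQ
      rw [Finset.mem_filter] at hQ
      have hQD : g Q ^ p ≤ D y := by
        calc g Q ^ p = (dyC Q).indicator (fun _ => g Q ^ p) y :=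
              (Set.indicator_of_mem hQ.2 (fun _ => g Q ^ p)).symm
          _ ≤ D y := Finset.single_le_sum
              (f := fun Q' => (dyC Q').indicator (fun _ => g Q' ^ p) y)
              (fun _ _ => zero_le) hQ.1
      calc g Q = (g Q ^ p) ^ (1/p) := by
            rw [← ENNReal.rpow_mul, mul_one_div, div_self hp0.ne', ENNReal.rpow_one]
        _ ≤ (D y) ^ (1/p) := ENNReal.rpow_le_rpow hQD (by positivity)
    calc Φ y = ∑ Q ∈ S.filter (fun Q => y ∈ dyC Q), g Q ^ r := hΦy
      _ ≤ cc * ((S.filter (fun Q => y ∈ dyC Q)).sup g) ^ r := hgeom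
      _ ≤ cc * ((D y ^ (1/p)) ^ r) := mul_le_mul_right (ENNReal.rpow_le_rpow hsup hr.le) _
      _ = cc * D y ^ (1/q) := by rw [← ENNReal.rpow_mul, h1pr]
  -- Step 3 : ∫ Φ^q w ≤ cc^q * T
  have step3 : ∫⁻ y, Φ y ^ q * w y ≤ cc ^ q * T := by
    have hb : ∀ y, Φ y ^ q * w y ≤ cc ^ q * (D y * w y) := by
      intro y
      calc Φ y ^ q * w y ≤ (cc * D y ^ (1/q)) ^ q * w y :=
            mul_le_mul_left (ENNReal.rpow_le_rpow (hΦD y) hq0.le) _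
        _ = cc ^ q * (D y * w y) := by
            rw [ENNReal.mul_rpow_of_nonneg _ _ hq0.le, ← ENNReal.rpow_mul,
              one_div_mul_cancel hq0.ne', ENNReal.rpow_one, mul_assoc]
    calc ∫⁻ y, Φ y ^ q * w y ≤ ∫⁻ y, cc ^ q * (D y * w y) := lintegral_mono hb
      _ = cc ^ q * ∫⁻ y, D y * w y := lintegral_const_mul _ (hDm.mul hw)
      _ = cc ^ q * T := by
          congr 1
          have hDw : ∀ y, D y * w y
              = ∑ Q ∈ S, (dyC Q).indicator (fun y => g Q ^ p * w y) y := by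
            intro y
            rw [hDdef, Finset.sum_mul]
            refine Finset.sum_congr rfl fun Q _ => ?_
            by_cases hy : y ∈ dyC Q
            · simp [Set.indicator_of_mem hy]
            · simp [Set.indicator_of_notMem hy]
          rw [lintegral_congr hDw, lintegral_finset_sum _ (f := fun Q y => (dyC Q).indicator (fun y => g Q ^ p * w y) y)
            (fun Q _ => (measurable_const.mul hw).indicator (measurableSet_dyC Q))]
          refine Finset.sum_congr rfl fun Q _ => ?_
          rw [lintegral_indicator (measurableSet_dyC Q), lintegral_const_mul _ hw]
  -- Step 4 : Hölder
  have step4 : ∫⁻ y, (f y * Φ y) * w y ≤ I ^ (1/p) * (∫⁻ y, Φ y ^ q * w y) ^ (1/q) := by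
    have hconv : ∀ (G : (Fin n → ℝ) → ℝ≥0∞), Measurable G →
        ∫⁻ y, G y ∂(volume.withDensity w) = ∫⁻ y, G y * w y := by
      intro G hG
      rw [lintegral_withDensity_eq_lintegral_mul _ hw hG]
      exact lintegral_congr fun y => mul_comm _ _
    have h := ENNReal.lintegral_mul_le_Lp_mul_Lq (volume.withDensity w) hpq
      hf.aemeasurable hΦm.aemeasurable
    simp only [Pi.mul_apply] at h
    rw [hconv (fun y => f y * Φ y) (hf.mul hΦm), hconv _ (hf.pow_const p), hconv _ (hΦm.pow_const q)] at h
    exact h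
  -- combine
  have hTtop : T ≠ ⊤ := by
    rw [hTdef]
    refine (ENNReal.sum_lt_top.mpr fun Q hQ => ?_).ne
    obtain ⟨-, -, hWt, -, hgt⟩ := hS Q hQ
    exact ENNReal.mul_lt_top (ENNReal.rpow_ne_top_of_nonneg hp0.le hgt).lt_top
      (lt_top_iff_ne_top.mpr hWt)
  have hTI : T ≤ I ^ (1/p) * (cc * T ^ (1/q)) := by
    have hcct : (cc ^ q * T) ^ (1/q) = cc * T ^ (1/q) := by
      rw [ENNReal.mul_rpow_of_nonneg _ _ (by positivity : (0:ℝ) ≤ 1/q),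
        ← ENNReal.rpow_mul, mul_one_div, div_self hq0.ne', ENNReal.rpow_one]
    calc T = ∫⁻ y, (f y * Φ y) * w y := step1
      _ ≤ I ^ (1/p) * (∫⁻ y, Φ y ^ q * w y) ^ (1/q) := step4
      _ ≤ I ^ (1/p) * (cc ^ q * T) ^ (1/q) :=
          mul_le_mul_right (ENNReal.rpow_le_rpow step3 (by positivity)) _
      _ = I ^ (1/p) * (cc * T ^ (1/q)) := by rw [hcct]
  by_cases hT0 : T = 0
  · rw [hT0]
    exact zero_le
  · have hT1q0 : T ^ (1/q) ≠ 0 := (ENNReal.rpow_pos (pos_iff_ne_zero.mpr hT0) hTtop).ne'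
    have hT1qt : T ^ (1/q) ≠ ⊤ :=
      ENNReal.rpow_ne_top_of_nonneg (by positivity) hTtop
    have hsplit : T = T ^ (1/p) * T ^ (1/q) := by
      rw [← ENNReal.rpow_add _ _ hT0 hTtop, hione, ENNReal.rpow_one]
    have hkey : T ^ (1/p) ≤ cc * I ^ (1/p) := by
      have h2 : T ^ (1/p) * T ^ (1/q) ≤ (cc * I ^ (1/p)) * T ^ (1/q) := by
        calc T ^ (1/p) * T ^ (1/q) = T := hsplit.symm
          _ ≤ I ^ (1/p) * (cc * T ^ (1/q)) := hTI
          _ = (cc * I ^ (1/p)) * T ^ (1/q) := by ring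
      exact (ENNReal.mul_le_mul_iff_left hT1q0 hT1qt).mp h2
    calc T = (T ^ (1/p)) ^ p := by
          rw [← ENNReal.rpow_mul, one_div_mul_cancel hp0.ne', ENNReal.rpow_one]
      _ ≤ (cc * I ^ (1/p)) ^ p := ENNReal.rpow_le_rpow hkey hp0.le
      _ = cc ^ p * I := by
          rw [ENNReal.mul_rpow_of_nonneg _ _ hp0.le, ← ENNReal.rpow_mul,
            one_div_mul_cancel hp0.ne', ENNReal.rpow_one]

end Boot
/-- `Σ_{L ∈ 𝓛} (E^w_L f)^p w(L) ≤ C_p ‖f‖_{L^p(w dm)}^p`, with `C_p` independent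
of the weight `w`. -/
theorem stopping_sum_Lp_bound (p : ℝ) (hp : 1 < p) :
    ∃ C : ℝ≥0∞, 0 < C ∧ C ≠ ⊤ ∧
      ∀ (n : ℕ) (w f : (Fin n → ℝ) → ℝ≥0∞), Measurable w → Measurable f →
        ∀ Q₀ : ℤ × (Fin n → ℤ),
          (∑' Q : ℤ × (Fin n → ℤ),
              if ∃ i, isStopping w f Q₀ i Q then
                (wAvg w f (dyC Q)) ^ p * ∫⁻ y in dyC Q, w y
              else 0) ≤
            C * ∫⁻ y, (f y) ^ p * w y := by
  have hp0 : 0 < p := by linarith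
  have hr : 0 < p - 1 := by linarith
  set q : ℝ := p / (p - 1) with hqdef
  have hpq : Real.HolderConjugate p q := by
    exact (Real.holderConjugate_iff_eq_conjExponent hp).2 hqdef
  set cc : ℝ≥0∞ := (1 - (4:ℝ≥0∞)⁻¹ ^ (p-1))⁻¹ with hccdef
  have ht1 : (4:ℝ≥0∞)⁻¹ ^ (p-1) < 1 := by
    calc (4:ℝ≥0∞)⁻¹ ^ (p-1) < 1 ^ (p-1) := by
          apply ENNReal.rpow_lt_rpow _ hr
          rw [ENNReal.inv_lt_one]
          norm_num
      _ = 1 := ENNReal.one_rpow _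
  have hsub0 : (1:ℝ≥0∞) - (4:ℝ≥0∞)⁻¹ ^ (p-1) ≠ 0 := by
    rw [ne_eq, tsub_eq_zero_iff_le]
    exact not_le.mpr ht1
  have hsubtop : (1:ℝ≥0∞) - (4:ℝ≥0∞)⁻¹ ^ (p-1) ≠ ⊤ :=
    ne_top_of_le_ne_top ENNReal.one_ne_top tsub_le_self
  have hcc0 : cc ≠ 0 := by
    rw [hccdef, ne_eq, ENNReal.inv_eq_zero]
    exact hsubtop
  have hcctop : cc ≠ ⊤ := by
    rw [hccdef, ne_eq, ENNReal.inv_eq_top]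
    exact hsub0
  refine ⟨cc ^ p, ENNReal.rpow_pos (pos_iff_ne_zero.mpr hcc0) hcctop,
    ENNReal.rpow_ne_top_of_nonneg hp0.le hcctop, ?_⟩
  intro n w f hw hf Q₀
  by_cases hinf : ∃ Q : ℤ × (Fin n → ℤ), (∃ i, isStopping w f Q₀ i Q) ∧
      wAvg w f (dyC Q) ^ p * (∫⁻ y in dyC Q, w y) = ⊤
  · obtain ⟨Q, hQst, hQtop⟩ := hinf
    have h1 : (⊤:ℝ≥0∞) ≤ ∫⁻ y in dyC Q, f y ^ p * w y :=
      hQtop ▸ avg_rpow_mul_le hpq hw hf (measurableSet_dyC Q)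
    have h2 : ∫⁻ y in dyC Q, f y ^ p * w y ≤ ∫⁻ y, f y ^ p * w y :=
      setLIntegral_le_lintegral _ _
    have hItop : ∫⁻ y, f y ^ p * w y = ⊤ := top_le_iff.mp (h1.trans h2)
    rw [hItop, ENNReal.mul_top (ENNReal.rpow_pos (pos_iff_ne_zero.mpr hcc0) hcctop).ne']
    exact le_top
  · push_neg at hinf
    rw [ENNReal.tsum_eq_iSup_sum]
    refine iSup_le fun s => ?_
    classical
    set Good : ℤ × (Fin n → ℤ) → Prop := fun Q => (∃ i, isStopping w f Q₀ i Q) ∧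
      (∫⁻ y in dyC Q, w y) ≠ 0 ∧ (∫⁻ y in dyC Q, w y) ≠ ⊤ ∧
      wAvg w f (dyC Q) ≠ 0 ∧ wAvg w f (dyC Q) ≠ ⊤ with hGooddef
    have hstep : ∀ Q ∈ s,
        (if ∃ i, isStopping w f Q₀ i Q then
          wAvg w f (dyC Q) ^ p * ∫⁻ y in dyC Q, w y else 0) ≠ 0 →
        Q ∈ s.filter Good := by
      intro Q hQs hne
      rw [Finset.mem_filter]
      refine ⟨hQs, ?_⟩
      by_cases hst : ∃ i, isStopping w f Q₀ i Q
      · rw [if_pos hst] at hne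
        have hg : wAvg w f (dyC Q) ≠ 0 := by
          intro h
          exact hne (by rw [h, ENNReal.zero_rpow_of_pos hp0, zero_mul])
        have hWtop : (∫⁻ y in dyC Q, w y) ≠ ⊤ := by
          intro h
          exact hg (by rw [wAvg, h, ENNReal.inv_top, zero_mul])
        have hW0 : (∫⁻ y in dyC Q, w y) ≠ 0 := by
          intro h
          apply hg
          have hw0 : w =ᵐ[volume.restrict (dyC Q)] 0 := (lintegral_eq_zero_iff hw).mp h
          have hfw : ∫⁻ y in dyC Q, f y * w y = 0 := by
            rw [lintegral_eq_zero_iff (f := fun y => f y * w y) (hf.mul hw)]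
            filter_upwards [hw0] with y hy
            simp only [Pi.zero_apply] at hy ⊢
            rw [hy, mul_zero]
          rw [wAvg, hfw, mul_zero]
        have hgtop : wAvg w f (dyC Q) ≠ ⊤ := by
          intro h
          exact hinf Q hst (by rw [h, ENNReal.top_rpow_of_pos hp0, ENNReal.top_mul hW0])
        exact ⟨hst, hW0, hWtop, hg, hgtop⟩
      · rw [if_neg hst] at hne
        exact absurd rfl hne
    calc (∑ Q ∈ s, if ∃ i, isStopping w f Q₀ i Q then
            wAvg w f (dyC Q) ^ p * ∫⁻ y in dyC Q, w y else 0)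
        ≤ ∑ Q ∈ s.filter Good, (if ∃ i, isStopping w f Q₀ i Q then
            wAvg w f (dyC Q) ^ p * ∫⁻ y in dyC Q, w y else 0) :=
          Finset.sum_le_sum_of_ne_zero hstep
      _ = ∑ Q ∈ s.filter Good, wAvg w f (dyC Q) ^ p * ∫⁻ y in dyC Q, w y := by
          refine Finset.sum_congr rfl fun Q hQ => ?_
          exact if_pos ((Finset.mem_filter.mp hQ).2).1
      _ ≤ cc ^ p * ∫⁻ y, f y ^ p * w y := by
          rw [hccdef]
          apply bootstrap hpq hw hf Q₀
          intro Q hQ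
          exact (Finset.mem_filter.mp hQ).2
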